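/- For nonnegative integers N and indeterminates a, q: ∑_{j≥0} q^{3·binom(N-2j,2)} C(N,2j)_{q^3} (-a q^4; q^6)_j (q^3; q^6)_j = ∑_{j≥0} a^j q^{3j^2+j} C(N,2j)_{q^3} (q^3; q^6)_j, where binom(m,2) = m(m-1)/2 and both sums are finite (terms vanish for 2j > N). -/

import Mathlib

open Finset

/-- q-Pochhammer symbol (a;q)_n. -/
noncomputable def qPoch {K : Type*} [Field K] (q a : K) (n : ℕ) : K :=
  ∏ j ∈ Finset.range n, (1 - a * q ^ j)

/-- Gaussian (q-)binomial coefficient. -/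
noncomputable def qbinom {K : Type*} [Field K] (q : K) (n k : ℕ) : K :=
  if k ≤ n then qPoch q q n / (qPoch q q k * qPoch q q (n - k)) else 0

section
variable {K : Type*} [Field K] (Q : K)

lemma qPoch_succ (a : K) (n : ℕ) : qPoch Q a (n+1) = qPoch Q a n * (1 - a * Q ^ n) := by
  simp [qPoch, Finset.prod_range_succ]

lemma qPoch_zero (a : K) : qPoch Q a 0 = 1 := by simp [qPoch]

lemma pq_succ (n : ℕ) : qPoch Q Q (n+1) = qPoch Q Q n * (1 - Q ^ (n+1)) := by
  rw [qPoch_succ, pow_succ, mul_comm (Q^n) Q]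

variable (hQ1 : ∀ m : ℕ, 1 ≤ m → Q ^ m ≠ 1)
include hQ1

lemma pq_ne (n : ℕ) : qPoch Q Q n ≠ 0 := by
  apply Finset.prod_ne_zero_iff.2
  intro j _
  have h := hQ1 (j+1) (Nat.le_add_left 1 j)
  intro hc
  exact h (by rw [pow_succ, mul_comm]; linear_combination -hc)

lemma one_sub_pow_ne {m : ℕ} (hm : 1 ≤ m) : (1 : K) - Q ^ m ≠ 0 := by
  intro h; exact hQ1 m hm (by linear_combination -h)

omit hQ1 in
lemma qbinom_of_le {n k : ℕ} (h : k ≤ n) :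
    qbinom Q n k = qPoch Q Q n / (qPoch Q Q k * qPoch Q Q (n - k)) := if_pos h

omit hQ1 in
lemma qbinom_of_gt {n k : ℕ} (h : n < k) : qbinom Q n k = 0 := if_neg (by omega)

lemma qbinom_zero (n : ℕ) : qbinom Q n 0 = 1 := by
  rw [qbinom_of_le Q (Nat.zero_le n)]
  simp [qPoch_zero, div_self (pq_ne Q hQ1 n)]

lemma qbinom_self (n : ℕ) : qbinom Q n n = 1 := by
  rw [qbinom_of_le Q le_rfl]
  simp [qPoch_zero, div_self (pq_ne Q hQ1 n)]

lemma pasc1 (n : ℕ) {k : ℕ} (hk : 1 ≤ k) :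
    qbinom Q (n+1) k = qbinom Q n k + Q^(n+1-k) * qbinom Q n (k-1) := by
  rcases lt_trichotomy k (n+1) with h | h | h
  · -- k ≤ n
    have hkn : k ≤ n := by omega
    rw [qbinom_of_le Q (by omega : k ≤ n+1), qbinom_of_le Q hkn,
      qbinom_of_le Q (by omega : k - 1 ≤ n)]
    rw [pq_succ,
      show n+1-k = (n-k)+1 from by omega, pq_succ,
      show n-k+1 = n+1-k from by omega,
      show qPoch Q Q k = qPoch Q Q (k-1) * (1 - Q ^ k) from by
        conv_lhs => rw [show k = (k-1)+1 from by omega]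
        rw [pq_succ, show k-1+1 = k from by omega],
      show n-(k-1) = (n-k)+1 from by omega, pq_succ,
      show n-k+1 = n+1-k from by omega,
      show Q^(n+1) = Q^(n+1-k) * Q^k from by rw [← pow_add]; congr 1; omega]
    have h1 : qPoch Q Q (k-1) ≠ 0 := pq_ne Q hQ1 _
    have h2 : qPoch Q Q (n-k) ≠ 0 := pq_ne Q hQ1 _
    have h3 : (1:K) - Q ^ k ≠ 0 := one_sub_pow_ne Q hQ1 hk
    have h4 : (1:K) - Q ^ (n+1-k) ≠ 0 := one_sub_pow_ne Q hQ1 (by omega)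
    field_simp
    ring
  · subst h
    rw [qbinom_self Q hQ1, qbinom_of_gt Q (by omega), show n+1-(n+1) = 0 from by omega,
      show n+1-1 = n from by omega, qbinom_self Q hQ1]
    ring
  · rw [qbinom_of_gt Q (by omega), qbinom_of_gt Q (by omega), qbinom_of_gt Q (by omega)]
    ring

lemma pasc2 (n : ℕ) {k : ℕ} (hk : 1 ≤ k) :
    qbinom Q (n+1) k = Q^k * qbinom Q n k + qbinom Q n (k-1) := by
  rcases lt_trichotomy k (n+1) with h | h | h
  · have hkn : k ≤ n := by omega
    rw [qbinom_of_le Q (by omega : k ≤ n+1), qbinom_of_le Q hkn,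
      qbinom_of_le Q (by omega : k - 1 ≤ n)]
    rw [pq_succ,
      show n+1-k = (n-k)+1 from by omega, pq_succ,
      show n-k+1 = n+1-k from by omega,
      show qPoch Q Q k = qPoch Q Q (k-1) * (1 - Q ^ k) from by
        conv_lhs => rw [show k = (k-1)+1 from by omega]
        rw [pq_succ, show k-1+1 = k from by omega],
      show n-(k-1) = (n-k)+1 from by omega, pq_succ,
      show n-k+1 = n+1-k from by omega,
      show Q^(n+1) = Q^k * Q^(n+1-k) from by rw [← pow_add]; congr 1; omega]
    have h1 : qPoch Q Q (k-1) ≠ 0 := pq_ne Q hQ1 _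
    have h2 : qPoch Q Q (n-k) ≠ 0 := pq_ne Q hQ1 _
    have h3 : (1:K) - Q ^ k ≠ 0 := one_sub_pow_ne Q hQ1 hk
    have h4 : (1:K) - Q ^ (n+1-k) ≠ 0 := one_sub_pow_ne Q hQ1 (by omega)
    field_simp
    ring
  · subst h
    rw [qbinom_self Q hQ1, qbinom_of_gt Q (by omega), show n+1-1 = n from by omega,
      qbinom_self Q hQ1]
    ring
  · rw [qbinom_of_gt Q (by omega), qbinom_of_gt Q (by omega), qbinom_of_gt Q (by omega)]
    ring

-- termwise lemma for R2: (1-Q^m) C(L,m) = (1-Q^L) C(L-1,m-1), for 1 ≤ m, stated with L = L'+1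
lemma ratio_lemma (L : ℕ) {m : ℕ} (hm : 1 ≤ m) :
    (1 - Q^m) * qbinom Q (L+1) m = (1 - Q^(L+1)) * qbinom Q L (m-1) := by
  rcases lt_trichotomy m (L+1) with h | h | h
  · rw [qbinom_of_le Q (by omega : m ≤ L+1), qbinom_of_le Q (by omega : m-1 ≤ L)]
    rw [pq_succ,
      show qPoch Q Q m = qPoch Q Q (m-1) * (1 - Q ^ m) from by
        conv_lhs => rw [show m = (m-1)+1 from by omega]
        rw [pq_succ, show m-1+1 = m from by omega],
      show L+1-m = L-(m-1) from by omega]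
    have h1 : qPoch Q Q (m-1) ≠ 0 := pq_ne Q hQ1 _
    have h2 : qPoch Q Q (L-(m-1)) ≠ 0 := pq_ne Q hQ1 _
    have h3 : (1:K) - Q ^ m ≠ 0 := one_sub_pow_ne Q hQ1 hm
    field_simp
  · subst h
    rw [qbinom_self Q hQ1, show L+1-1 = L from by omega, qbinom_self Q hQ1]
  · rw [qbinom_of_gt Q (by omega), qbinom_of_gt Q (by omega)]
    ring

omit hQ1 in
lemma tri1' (m : ℕ) : (m+1)*m/2 = m*(m-1)/2 + m := by
  rcases m with _ | j
  · simp
  · obtain ⟨r, hr⟩ := Nat.even_mul_succ_self j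
    have h1 : (j+1+1)*(j+1) = j*(j+1) + 2*(j+1) := by ring
    have h2 : (j+1)*(j+1-1) = j*(j+1) := by rw [Nat.add_sub_cancel]; ring
    rw [h1, h2, hr]
    omega

omit hQ1 in
lemma expA (M i : ℕ) (h : 2*i+2 ≤ M+1) :
    (M+2-2*(i+1))*(M+2-2*(i+1)-1)/2 + 2*(i+1) = (M+1) + (M+1-2*(i+1))*(M+1-2*(i+1)-1)/2 := by
  have h1 := tri1' (M-2*i-1)
  rw [show M+2-2*(i+1) = (M-2*i-1)+1 from by omega, Nat.add_sub_cancel,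
    show M+1-2*(i+1) = M-2*i-1 from by omega, h1]
  omega

omit hQ1 in
lemma expA0 (M : ℕ) : (M+2-2*0)*(M+2-2*0-1)/2 = (M+1) + (M+1-2*0)*(M+1-2*0-1)/2 := by
  have h1 := tri1' (M+1)
  simp only [Nat.mul_zero, Nat.sub_zero]
  rw [show M+2 = (M+1)+1 from rfl, Nat.add_sub_cancel, h1]
  omega

-- finite q-binomial theorem
lemma qbt (t : K) (n : ℕ) :
    qPoch Q (-t) n = ∑ k ∈ Finset.range (n+1), Q^(k*(k-1)/2) * qbinom Q n k * t^k := by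
  induction n with
  | zero => simp [qPoch_zero, qbinom_zero Q hQ1]
  | succ n ih =>
    rw [qPoch_succ, ih, Finset.sum_range_succ' _ (n+1)]
    have hsplit : ∀ i ∈ Finset.range (n+1),
        Q^((i+1)*(i+1-1)/2) * qbinom Q (n+1) (i+1) * t^(i+1)
        = Q^((i+1)*(i+1-1)/2) * qbinom Q n (i+1) * t^(i+1)
          + (t * Q^n) * (Q^(i*(i-1)/2) * qbinom Q n i * t^i) := by
      intro i hi
      rw [Finset.mem_range] at hi
      rw [pasc1 Q hQ1 n (Nat.le_add_left 1 i), Nat.add_sub_cancel]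
      have hexp : (i+1)*i/2 + (n+1-(i+1)) = i*(i-1)/2 + n := by
        rw [tri1']
        omega
      have hpow : Q^((i+1)*i/2) * Q^(n+1-(i+1)) = Q^(i*(i-1)/2) * Q^n := by
        rw [← pow_add, ← pow_add, hexp]
      linear_combination (qbinom Q n i * t^(i+1)) * hpow
    rw [Finset.sum_congr rfl hsplit, Finset.sum_add_distrib]
    have h' := Finset.sum_range_succ' (fun k => Q^(k*(k-1)/2) * qbinom Q n k * t^k) (n+1)
    rw [Finset.sum_range_succ] at h'
    rw [qbinom_of_gt Q (Nat.lt_succ_self n)] at h'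
    have hms : ∑ x ∈ Finset.range (n+1), t * Q^n * (Q^(x*(x-1)/2) * qbinom Q n x * t^x)
        = (t*Q^n) * ∑ x ∈ Finset.range (n+1), Q^(x*(x-1)/2) * qbinom Q n x * t^x := by
      rw [Finset.mul_sum]
    rw [hms]
    rw [qbinom_zero Q hQ1] at h'
    rw [qbinom_zero Q hQ1]
    linear_combination h'

lemma hQ2 : ∀ m : ℕ, 1 ≤ m → (Q^2) ^ m ≠ 1 := by
  intro m hm
  rw [← pow_mul]
  exact hQ1 (2*m) (by omega)

lemma pq2_ne (n : ℕ) : qPoch (Q^2) (Q^2) n ≠ 0 := pq_ne (Q^2) (hQ2 Q hQ1) n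

lemma pqo_ne (n : ℕ) : qPoch (Q^2) Q n ≠ 0 := by
  apply Finset.prod_ne_zero_iff.2
  intro j _
  have h : Q * (Q^2) ^ j = Q ^ (2*j+1) := by
    rw [← pow_mul, pow_succ, mul_comm (Q^(2*j)) Q, mul_comm 2 j]
  rw [h]
  exact fun hc => hQ1 (2*j+1) (by omega) (by linear_combination -hc)

-- (Q;Q)_{2j} = (Q;Q²)_j (Q²;Q²)_j
omit hQ1 in
lemma pq_even_factor (j : ℕ) : qPoch Q Q (2*j) = qPoch (Q^2) Q j * qPoch (Q^2) (Q^2) j := by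
  induction j with
  | zero => simp [qPoch_zero]
  | succ j ih =>
    rw [show 2*(j+1) = (2*j+1)+1 from by ring, pq_succ, pq_succ, qPoch_succ, qPoch_succ, ih]
    have h1 : Q * (Q^2) ^ j = Q ^ (2*j+1) := by
      rw [← pow_mul, pow_succ, mul_comm (Q^(2*j)) Q, mul_comm 2 j]
    have h2 : (Q^2) * (Q^2) ^ j = Q ^ (2*j+1+1) := by
      rw [← pow_mul, ← pow_add]
      congr 1
      omega
    rw [h1, h2]
    ring

-- V1 : (Q;Q²)_j C(j,k)_{Q²} = C(2j,2k)_Q (Q;Q²)_k (Q;Q²)_{j-k}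
lemma V1 (j k : ℕ) :
    qPoch (Q^2) Q j * qbinom (Q^2) j k
    = qbinom Q (2*j) (2*k) * (qPoch (Q^2) Q k * qPoch (Q^2) Q (j-k)) := by
  rcases le_or_gt k j with h | h
  · rw [qbinom_of_le (Q^2) h, qbinom_of_le Q (by omega : 2*k ≤ 2*j),
      show 2*j - 2*k = 2*(j-k) from by omega, pq_even_factor, pq_even_factor, pq_even_factor]
    have h1 := pqo_ne Q hQ1 j
    have h2 := pqo_ne Q hQ1 k
    have h3 := pqo_ne Q hQ1 (j-k)
    have h4 := pq2_ne Q hQ1 j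
    have h5 := pq2_ne Q hQ1 k
    have h6 := pq2_ne Q hQ1 (j-k)
    field_simp
  · rw [qbinom_of_gt (Q^2) h, qbinom_of_gt Q (by omega : 2*j < 2*k)]
    ring

-- V2 : C(N,2j) C(2j,2k) = C(N,2k) C(N-2k, 2(j-k))  for k ≤ j
lemma V2 (N j k : ℕ) (hkj : k ≤ j) :
    qbinom Q N (2*j) * qbinom Q (2*j) (2*k)
    = qbinom Q N (2*k) * qbinom Q (N-2*k) (2*(j-k)) := by
  rcases le_or_gt (2*j) N with h | h
  · rw [qbinom_of_le Q h, qbinom_of_le Q (by omega : 2*k ≤ 2*j),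
      qbinom_of_le Q (by omega : 2*k ≤ N), qbinom_of_le Q (by omega : 2*(j-k) ≤ N - 2*k),
      show 2*j - 2*k = 2*(j-k) from by omega,
      show N - 2*k - 2*(j-k) = N - 2*j from by omega]
    have h1 := pq_ne Q hQ1 (2*k)
    have h2 := pq_ne Q hQ1 (2*(j-k))
    have h3 := pq_ne Q hQ1 (N-2*j)
    have h4 := pq_ne Q hQ1 (2*j)
    have h5 := pq_ne Q hQ1 N
    have h6 := pq_ne Q hQ1 (N-2*k)
    field_simp
  · rcases le_or_gt (2*k) N with h' | h'
    · rw [qbinom_of_gt Q h, qbinom_of_gt Q (by omega : N - 2*k < 2*(j-k))]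
      ring
    · rw [qbinom_of_gt Q h, qbinom_of_gt Q h']
      ring

end

noncomputable def Fterm {K : Type*} [Field K] (Q : K) (M i : ℕ) : K :=
  Q^((M-2*i)*(M-2*i-1)/2) * qbinom Q M (2*i) * qPoch (Q^2) Q i

section
variable {K : Type*} [Field K] (Q : K) (hQ1 : ∀ m : ℕ, 1 ≤ m → Q ^ m ≠ 1)

lemma Fterm_zero_of_gt {M i : ℕ} (h : M < 2*i) : Fterm Q M i = 0 := by
  simp [Fterm, qbinom_of_gt Q h]

include hQ1

lemma Fsum_rec (M : ℕ) :
    ∑ i ∈ Finset.range (M+3), Fterm Q (M+2) i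
    = Q^(M+1) * ∑ i ∈ Finset.range (M+2), Fterm Q (M+1) i
      + (1 - Q^(M+1)) * ∑ i ∈ Finset.range (M+1), Fterm Q M i := by
  rw [Finset.sum_range_succ' (fun i => Fterm Q (M+2) i) (M+2)]
  have hsplit : ∀ i ∈ Finset.range (M+2), Fterm Q (M+2) (i+1)
      = Q^((M+2-2*(i+1))*(M+2-2*(i+1)-1)/2) * (Q^(2*(i+1)) * qbinom Q (M+1) (2*(i+1)))
          * qPoch (Q^2) Q (i+1)
        + (1 - Q^(M+1)) * Fterm Q M i := by
    intro i _
    show Fterm Q ((M+1)+1) (i+1) = _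
    rw [Fterm, pasc2 Q hQ1 (M+1) (by omega : 1 ≤ 2*(i+1)),
      show 2*(i+1)-1 = 2*i+1 from by omega]
    have hodd : Q * (Q^2) ^ i = Q ^ (2*i+1) := by
      rw [← pow_mul, pow_succ, mul_comm (Q^(2*i)) Q, mul_comm 2 i]
    have hp : qPoch (Q^2) Q (i+1) = qPoch (Q^2) Q i * (1 - Q^(2*i+1)) := by
      rw [qPoch_succ, hodd]
    have hr := ratio_lemma Q hQ1 M (by omega : 1 ≤ 2*i+1)
    rw [show 2*i+1-1 = 2*i from by omega] at hr
    have hexp : (M+1+1-2*(i+1))*(M+1+1-2*(i+1)-1)/2 = (M-2*i)*(M-2*i-1)/2 := by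
      rw [show M+1+1-2*(i+1) = M-2*i from by omega]
    rw [hexp, Fterm]
    linear_combination (Q^((M-2*i)*(M-2*i-1)/2) * qPoch (Q^2) Q i) * hr
      + (Q^((M-2*i)*(M-2*i-1)/2) * qbinom Q (M+1) (2*i+1)) * hp
  rw [Finset.sum_congr rfl hsplit, Finset.sum_add_distrib]
  -- B part
  have hB : ∑ i ∈ Finset.range (M+2), (1 - Q^(M+1)) * Fterm Q M i
      = (1 - Q^(M+1)) * ∑ i ∈ Finset.range (M+1), Fterm Q M i := by
    rw [← Finset.mul_sum, Finset.sum_range_succ,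
      Fterm_zero_of_gt Q (by omega : M < 2*(M+1)), add_zero]
  -- A part
  have hA : (∑ i ∈ Finset.range (M+2),
        Q^((M+2-2*(i+1))*(M+2-2*(i+1)-1)/2) * (Q^(2*(i+1)) * qbinom Q (M+1) (2*(i+1)))
          * qPoch (Q^2) Q (i+1))
      + Fterm Q (M+2) 0
      = Q^(M+1) * ∑ i ∈ Finset.range (M+2), Fterm Q (M+1) i := by
    rw [Finset.sum_range_succ' (fun i => Fterm Q (M+1) i) (M+1), Finset.sum_range_succ,
      qbinom_of_gt Q (by omega : M+1 < 2*(M+1+1))]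
    have hA1 : ∀ i ∈ Finset.range (M+1),
        Q^((M+2-2*(i+1))*(M+2-2*(i+1)-1)/2) * (Q^(2*(i+1)) * qbinom Q (M+1) (2*(i+1)))
          * qPoch (Q^2) Q (i+1)
        = Q^(M+1) * Fterm Q (M+1) (i+1) := by
      intro i _
      rcases le_or_gt (2*(i+1)) (M+1) with h | h
      · rw [Fterm]
        rw [show Q^((M+2-2*(i+1))*(M+2-2*(i+1)-1)/2) * (Q^(2*(i+1)) * qbinom Q (M+1) (2*(i+1)))
              * qPoch (Q^2) Q (i+1)
            = (Q^((M+2-2*(i+1))*(M+2-2*(i+1)-1)/2) * Q^(2*(i+1)))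
              * qbinom Q (M+1) (2*(i+1)) * qPoch (Q^2) Q (i+1) from by ring,
          ← pow_add, expA M i (by omega), pow_add]
        ring
      · rw [qbinom_of_gt Q h, Fterm, qbinom_of_gt Q h]
        ring
    rw [Finset.sum_congr rfl hA1]
    have h0 : Fterm Q (M+2) 0 = Q^(M+1) * Fterm Q (M+1) 0 := by
      rw [Fterm, Fterm, qbinom_zero Q hQ1, qbinom_zero Q hQ1,
        show (M+2-2*0)*(M+2-2*0-1)/2 = (M+1) + (M+1-2*0)*(M+1-2*0-1)/2 from expA0 M, pow_add]
      ring
    rw [h0]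
    simp only [mul_zero, zero_mul, add_zero]
    rw [mul_add, Finset.mul_sum]
  rw [hB]
  rw [show (∑ i ∈ Finset.range (M+2),
        Q^((M+2-2*(i+1))*(M+2-2*(i+1)-1)/2) * (Q^(2*(i+1)) * qbinom Q (M+1) (2*(i+1)))
          * qPoch (Q^2) Q (i+1))
      + (1 - Q^(M+1)) * ∑ i ∈ Finset.range (M+1), Fterm Q M i + Fterm Q (M+2) 0
      = ((∑ i ∈ Finset.range (M+2),
        Q^((M+2-2*(i+1))*(M+2-2*(i+1)-1)/2) * (Q^(2*(i+1)) * qbinom Q (M+1) (2*(i+1)))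
          * qPoch (Q^2) Q (i+1)) + Fterm Q (M+2) 0)
      + (1 - Q^(M+1)) * ∑ i ∈ Finset.range (M+1), Fterm Q M i from by ring, hA]

lemma Fsum_one : ∀ M : ℕ, ∑ i ∈ Finset.range (M+1), Fterm Q M i = 1 := by
  have key : ∀ M : ℕ, (∑ i ∈ Finset.range (M+1), Fterm Q M i = 1)
      ∧ (∑ i ∈ Finset.range (M+2), Fterm Q (M+1) i = 1) := by
    intro M
    induction M with
    | zero =>
      constructor
      · simp [Fterm, qbinom_zero Q hQ1, qPoch_zero]
      · rw [Finset.sum_range_succ, Finset.sum_range_one]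
        rw [Fterm_zero_of_gt Q (by omega : 1 < 2*1), add_zero]
        simp [Fterm, qbinom_zero Q hQ1, qPoch_zero]
    | succ M ih =>
      refine ⟨ih.2, ?_⟩
      rw [show M+1+2 = M+3 from rfl, Fsum_rec Q hQ1 M, ih.1, ih.2]
      ring
  exact fun M => (key M).1

lemma Fsum_ext {M n : ℕ} (h : M ≤ n) :
    ∑ i ∈ Finset.range (n+1), Fterm Q M i = 1 := by
  rw [← Fsum_one Q hQ1 M]
  symm
  apply Finset.sum_subset (Finset.range_subset_range.2 (by omega))
  intro i _ hi
  rw [Finset.mem_range] at hi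
  exact Fterm_zero_of_gt Q (by omega)

lemma termwise (N j k : ℕ) (hkj : k ≤ j) :
    qbinom Q N (2*j) * qPoch (Q^2) Q j * qbinom (Q^2) j k
    = qbinom Q N (2*k) * qPoch (Q^2) Q k
      * (qbinom Q (N-2*k) (2*(j-k)) * qPoch (Q^2) Q (j-k)) := by
  have h1 := V1 Q hQ1 j k
  have h2 := V2 Q hQ1 N j k hkj
  calc qbinom Q N (2*j) * qPoch (Q^2) Q j * qbinom (Q^2) j k
      = qbinom Q N (2*j) * (qPoch (Q^2) Q j * qbinom (Q^2) j k) := by ring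
    _ = qbinom Q N (2*j) * (qbinom Q (2*j) (2*k) * (qPoch (Q^2) Q k * qPoch (Q^2) Q (j-k))) := by
        rw [h1]
    _ = (qbinom Q N (2*j) * qbinom Q (2*j) (2*k)) * (qPoch (Q^2) Q k * qPoch (Q^2) Q (j-k)) := by
        ring
    _ = (qbinom Q N (2*k) * qbinom Q (N-2*k) (2*(j-k)))
          * (qPoch (Q^2) Q k * qPoch (Q^2) Q (j-k)) := by rw [h2]
    _ = _ := by ring

lemma S_eq (N k : ℕ) (hk : k ≤ N) :
    ∑ j ∈ Finset.range (N+1),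
      Q^((N-2*j)*(N-2*j-1)/2) * qbinom Q N (2*j) * qPoch (Q^2) Q j * qbinom (Q^2) j k
    = qbinom Q N (2*k) * qPoch (Q^2) Q k := by
  rw [Finset.range_eq_Ico,
    ← Finset.sum_Ico_consecutive _ (Nat.zero_le k) (by omega : k ≤ N+1)]
  have hz : ∑ j ∈ Finset.Ico 0 k,
      Q^((N-2*j)*(N-2*j-1)/2) * qbinom Q N (2*j) * qPoch (Q^2) Q j * qbinom (Q^2) j k = 0 := by
    apply Finset.sum_eq_zero
    intro j hj
    rw [Finset.mem_Ico] at hj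
    rw [qbinom_of_gt (Q^2) (by omega : j < k)]
    ring
  rw [hz, zero_add, Finset.sum_Ico_eq_sum_range]
  have hterm : ∀ i ∈ Finset.range (N+1-k),
      Q^((N-2*(k+i))*(N-2*(k+i)-1)/2) * qbinom Q N (2*(k+i)) * qPoch (Q^2) Q (k+i)
        * qbinom (Q^2) (k+i) k
      = (qbinom Q N (2*k) * qPoch (Q^2) Q k) * Fterm Q (N-2*k) i := by
    intro i _
    have ht := termwise Q hQ1 N (k+i) k (by omega)
    rw [show k+i-k = i from by omega] at ht
    rw [show N-2*(k+i) = N-2*k-2*i from by omega, Fterm]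
    calc Q^((N-2*k-2*i)*(N-2*k-2*i-1)/2) * qbinom Q N (2*(k+i)) * qPoch (Q^2) Q (k+i)
          * qbinom (Q^2) (k+i) k
        = Q^((N-2*k-2*i)*(N-2*k-2*i-1)/2)
            * (qbinom Q N (2*(k+i)) * qPoch (Q^2) Q (k+i) * qbinom (Q^2) (k+i) k) := by ring
      _ = Q^((N-2*k-2*i)*(N-2*k-2*i-1)/2)
            * (qbinom Q N (2*k) * qPoch (Q^2) Q k
              * (qbinom Q (N-2*k) (2*i) * qPoch (Q^2) Q i)) := by rw [ht]
      _ = _ := by ring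
  rw [Finset.sum_congr rfl hterm, ← Finset.mul_sum]
  rcases Nat.exists_eq_add_of_le (by omega : N-2*k ≤ N-k) with ⟨d, hd⟩
  rw [show N+1-k = (N-k)+1 from by omega, Fsum_ext Q hQ1 (by omega : N-2*k ≤ N-k), mul_one]

theorem main_abs (N : ℕ) (t : K) :
    ∑ j ∈ Finset.range (N+1), Q^((N-2*j)*(N-2*j-1)/2) * qbinom Q N (2*j)
        * qPoch (Q^2) (-t) j * qPoch (Q^2) Q j
    = ∑ k ∈ Finset.range (N+1), t^k * (Q^2)^(k*(k-1)/2) * qbinom Q N (2*k)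
        * qPoch (Q^2) Q k := by
  have step1 : ∀ j ∈ Finset.range (N+1),
      Q^((N-2*j)*(N-2*j-1)/2) * qbinom Q N (2*j) * qPoch (Q^2) (-t) j * qPoch (Q^2) Q j
      = ∑ k ∈ Finset.range (N+1), (t^k * (Q^2)^(k*(k-1)/2))
          * (Q^((N-2*j)*(N-2*j-1)/2) * qbinom Q N (2*j) * qPoch (Q^2) Q j
              * qbinom (Q^2) j k) := by
    intro j hj
    rw [Finset.mem_range] at hj
    rw [qbt (Q^2) (hQ2 Q hQ1) t j]
    have hext : ∑ k ∈ Finset.range (j+1), (Q^2)^(k*(k-1)/2) * qbinom (Q^2) j k * t^k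
        = ∑ k ∈ Finset.range (N+1), (Q^2)^(k*(k-1)/2) * qbinom (Q^2) j k * t^k := by
      apply Finset.sum_subset (Finset.range_subset_range.2 (by omega))
      intro k _ hk
      rw [Finset.mem_range] at hk
      rw [qbinom_of_gt (Q^2) (by omega : j < k)]
      ring
    rw [hext, Finset.mul_sum, Finset.sum_mul]
    apply Finset.sum_congr rfl
    intro k _
    ring
  rw [Finset.sum_congr rfl step1, Finset.sum_comm]
  apply Finset.sum_congr rfl
  intro k hk
  rw [Finset.mem_range] at hk
  rw [← Finset.mul_sum, S_eq Q hQ1 N k (by omega)]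
  ring

end

lemma expfin (k : ℕ) : 4*k + 6*(k*(k-1)/2) = 3*k^2+k := by
  rcases k with _ | m
  · simp
  · rw [Nat.add_sub_cancel]
    obtain ⟨r, hr⟩ := Nat.even_mul_succ_self m
    have h1 : (m+1)*m = r+r := by rw [mul_comm]; exact hr
    rw [h1, show (r+r)/2 = r from by omega]
    have h2 : (m+1)^2 = m*(m+1) + (m+1) := by ring
    omega

/-- Corollary 14 of the paper, with a = X 0 and q = X 1 indeterminates. -/
theorem corollary_CO (N : ℕ) (a q : FractionRing (MvPolynomial (Fin 2) ℚ))
    (ha : a = algebraMap (MvPolynomial (Fin 2) ℚ) _ (MvPolynomial.X 0))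
    (hq : q = algebraMap (MvPolynomial (Fin 2) ℚ) _ (MvPolynomial.X 1)) :
    ∑ j ∈ Finset.range (N + 1),
        q ^ (3 * ((N - 2 * j) * (N - 2 * j - 1) / 2)) * qbinom (q ^ 3) N (2 * j) *
          qPoch (q ^ 6) (-(a * q ^ 4)) j * qPoch (q ^ 6) (q ^ 3) j =
      ∑ j ∈ Finset.range (N + 1),
        a ^ j * q ^ (3 * j ^ 2 + j) * qbinom (q ^ 3) N (2 * j) *
          qPoch (q ^ 6) (q ^ 3) j := by
  have hq1 : ∀ m : ℕ, 1 ≤ m → (q^3)^m ≠ 1 := by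
    intro m hm hc
    rw [← pow_mul, hq, ← map_pow, ← map_one (algebraMap (MvPolynomial (Fin 2) ℚ)
      (FractionRing (MvPolynomial (Fin 2) ℚ)))] at hc
    have h2 := IsFractionRing.injective (MvPolynomial (Fin 2) ℚ)
      (FractionRing (MvPolynomial (Fin 2) ℚ)) hc
    have h3 := congrArg (MvPolynomial.eval (fun _ => (2:ℚ))) h2
    simp only [MvPolynomial.eval_pow, MvPolynomial.eval_X, map_one] at h3
    have h4 : (1:ℚ) < 2^(3*m) := by
      apply one_lt_pow₀ (by norm_num)
      omega
    rw [h3] at h4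
    exact lt_irrefl 1 h4
  have habs := main_abs (q^3) hq1 N (a*q^4)
  have h6 : (q^3)^2 = q^6 := by rw [← pow_mul]
  rw [h6] at habs
  calc ∑ j ∈ Finset.range (N + 1),
        q ^ (3 * ((N - 2 * j) * (N - 2 * j - 1) / 2)) * qbinom (q ^ 3) N (2 * j) *
          qPoch (q ^ 6) (-(a * q ^ 4)) j * qPoch (q ^ 6) (q ^ 3) j
      = ∑ j ∈ Finset.range (N+1), (q^3) ^ ((N - 2*j) * (N - 2*j - 1) / 2)
          * qbinom (q^3) N (2*j) * qPoch (q^6) (-(a * q^4)) j * qPoch (q^6) (q^3) j := by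
        apply Finset.sum_congr rfl
        intro j _
        rw [pow_mul]
    _ = ∑ k ∈ Finset.range (N+1), (a*q^4)^k * (q^6)^(k*(k-1)/2) * qbinom (q^3) N (2*k)
          * qPoch (q^6) (q^3) k := habs
    _ = ∑ j ∈ Finset.range (N + 1),
        a ^ j * q ^ (3 * j ^ 2 + j) * qbinom (q ^ 3) N (2 * j) *
          qPoch (q ^ 6) (q ^ 3) j := by
        apply Finset.sum_congr rfl
        intro k _
        rw [mul_pow, ← pow_mul, ← pow_mul, mul_comm 4 k]
        rw [show a^k * q^(k*4) * q^(6*(k*(k-1)/2)) = a^k * (q^(k*4) * q^(6*(k*(k-1)/2)))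
          from by ring, ← pow_add, show k*4 + 6*(k*(k-1)/2) = 3*k^2+k from by
            rw [← expfin k]; ring_nf]
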